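/- arXiv:2507.03178 — 3 statements merged into one kernel-verified Lean document; each statement's English description precedes it below -/
import Mathlib

section
/- Let C be a binary [n,k] linear code with k > 0. Then 1 ≤ d₁(C) < d₂(C) < ⋯ < d_k(C) ≤ n, i.e., the generalized Hamming weights of C are strictly increasing, the first is at least 1, and the k-th is at most n. -/
/-- The support of a subcode `D ⊆ F₂ⁿ`: coordinates where some codeword of `D`
is nonzero. -/
def codeSupport {n : ℕ} (D : Submodule (ZMod 2) (Fin n → ZMod 2)) : Set (Fin n) :=
  { i | ∃ c ∈ D, c i ≠ 0 }

/-- The `r`-th generalized Hamming weight of a code `C ⊆ F₂ⁿ`: the size of the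
smallest support of an `r`-dimensional linear subcode of `C`. -/
noncomputable def ghw {n : ℕ} (C : Submodule (ZMod 2) (Fin n → ZMod 2)) (r : ℕ) : ℕ :=
  sInf { w | ∃ D : Submodule (ZMod 2) (Fin n → ZMod 2),
    D ≤ C ∧ Module.finrank (ZMod 2) D = r ∧ w = (codeSupport D).ncard }

open Module

/-- Any code contains a subcode of each dimension up to its own. -/
lemma exists_subcode {n : ℕ} (C : Submodule (ZMod 2) (Fin n → ZMod 2)) (r : ℕ)
    (hr : r ≤ finrank (ZMod 2) C) :
    ∃ D : Submodule (ZMod 2) (Fin n → ZMod 2), D ≤ C ∧ finrank (ZMod 2) D = r := by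
  have b := finBasis (ZMod 2) C
  set v : Fin r → (Fin n → ZMod 2) := fun j => (b (Fin.castLE hr j) : Fin n → ZMod 2)
  have hli : LinearIndependent (ZMod 2) v := by
    have h2 : LinearIndependent (ZMod 2) (fun j : Fin r => b (Fin.castLE hr j)) :=
      b.linearIndependent.comp _ (Fin.castLE_injective hr)
    exact h2.map' C.subtype (Submodule.ker_subtype C)
  refine ⟨Submodule.span (ZMod 2) (Set.range v), ?_, ?_⟩
  · rw [Submodule.span_le]
    rintro _ ⟨j, rfl⟩
    exact (b (Fin.castLE hr j)).2
  · rw [finrank_span_eq_card hli, Fintype.card_fin]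

/-- A code of positive dimension has nonempty support. -/
lemma codeSupport_nonempty {n : ℕ} (D : Submodule (ZMod 2) (Fin n → ZMod 2))
    (h : 0 < finrank (ZMod 2) D) : (codeSupport D).Nonempty := by
  have hnt : Nontrivial D := by rwa [finrank_pos_iff] at h
  obtain ⟨⟨c, hc⟩, hc0⟩ := exists_ne (0 : D)
  have hcne : c ≠ 0 := by
    intro h0
    exact hc0 (by simp [Subtype.ext_iff, h0])
  obtain ⟨i, hi⟩ := Function.ne_iff.mp hcne
  exact ⟨i, c, hc, by simpa using hi⟩

/-- Key step: kill one support coordinate, dropping the dimension by exactly one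
and shrinking the support. -/
lemma exists_smaller_subcode {n : ℕ} (D : Submodule (ZMod 2) (Fin n → ZMod 2))
    {i : Fin n} (hi : i ∈ codeSupport D) :
    ∃ D' : Submodule (ZMod 2) (Fin n → ZMod 2), D' ≤ D ∧
      finrank (ZMod 2) D' + 1 = finrank (ZMod 2) D ∧
      codeSupport D' ⊆ codeSupport D \ {i} := by
  classical
  set f : D →ₗ[ZMod 2] ZMod 2 :=
    (LinearMap.proj i).comp D.subtype with hf
  obtain ⟨c, hcD, hci⟩ := hi
  have hsurj : Function.Surjective f := by
    intro a
    refine ⟨(a * (c i)⁻¹) • ⟨c, hcD⟩, ?_⟩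
    simp only [hf, LinearMap.comp_apply, LinearMap.proj_apply]
    show (a * (c i)⁻¹) • c i = a
    rw [smul_eq_mul, mul_assoc, inv_mul_cancel₀ hci, mul_one]
  refine ⟨(LinearMap.ker f).map D.subtype, Submodule.map_subtype_le _ _, ?_, ?_⟩
  · rw [Submodule.finrank_map_subtype_eq]
    have := LinearMap.finrank_range_add_finrank_ker f
    rw [LinearMap.range_eq_top.mpr hsurj, finrank_top] at this
    simpa [add_comm] using this
  · rintro j ⟨x, hx, hxj⟩
    obtain ⟨⟨y, hyD⟩, hyk, rfl⟩ := hx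
    have hyi : y i = 0 := hyk
    refine ⟨⟨y, hyD, hxj⟩, ?_⟩
    intro hj
    rw [Set.mem_singleton_iff.mp hj] at hxj
    exact hxj hyi

/-- Wei's monotonicity: for a binary `[n,k]` linear code `C` with
`k > 0`, one has `1 ≤ d₁(C) < d₂(C) < ⋯ < d_k(C) ≤ n`. -/
theorem ghw_strict_mono {n k : ℕ} (C : Submodule (ZMod 2) (Fin n → ZMod 2))
    (hk : Module.finrank (ZMod 2) C = k) (hk0 : 0 < k) :
    1 ≤ ghw C 1 ∧ (∀ r, 1 ≤ r → r < k → ghw C r < ghw C (r + 1)) ∧ ghw C k ≤ n := by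
  classical
  refine ⟨?_, ?_, ?_⟩
  · -- 1 ≤ d₁
    have hne : {w | ∃ D : Submodule (ZMod 2) (Fin n → ZMod 2),
        D ≤ C ∧ finrank (ZMod 2) D = 1 ∧ w = (codeSupport D).ncard}.Nonempty := by
      obtain ⟨D, hDC, hDr⟩ := exists_subcode C 1 (by omega)
      exact ⟨_, D, hDC, hDr, rfl⟩
    obtain ⟨D, hDC, hDr, hDw⟩ := Nat.sInf_mem hne
    rw [Nat.one_le_iff_ne_zero]
    show sInf _ ≠ 0
    intro h0
    rw [h0] at hDw
    obtain ⟨i, hi⟩ := codeSupport_nonempty D (by omega)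
    have : (codeSupport D).ncard ≠ 0 :=
      Set.nonempty_iff_ne_empty.mp ⟨i, hi⟩ ∘ (Set.ncard_eq_zero (Set.toFinite _)).mp
    omega
  · -- strict monotonicity
    intro r hr1 hrk
    have hne : {w | ∃ D : Submodule (ZMod 2) (Fin n → ZMod 2),
        D ≤ C ∧ finrank (ZMod 2) D = r + 1 ∧ w = (codeSupport D).ncard}.Nonempty := by
      obtain ⟨D, hDC, hDr⟩ := exists_subcode C (r + 1) (by omega)
      exact ⟨_, D, hDC, hDr, rfl⟩
    obtain ⟨D, hDC, hDr, hDw⟩ := Nat.sInf_mem hne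
    obtain ⟨i, hi⟩ := codeSupport_nonempty D (by omega)
    obtain ⟨D', hD'D, hD'r, hD'supp⟩ := exists_smaller_subcode D hi
    have hlt : (codeSupport D').ncard < (codeSupport D).ncard := by
      calc (codeSupport D').ncard ≤ (codeSupport D \ {i}).ncard :=
            Set.ncard_le_ncard hD'supp (Set.toFinite _)
        _ < (codeSupport D).ncard :=
            Set.ncard_diff_singleton_lt_of_mem hi (Set.toFinite _)
    have hle : ghw C r ≤ (codeSupport D').ncard :=
      Nat.sInf_le ⟨D', hD'D.trans hDC, by omega, rfl⟩
    have : ghw C (r + 1) = (codeSupport D).ncard := hDw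
    omega
  · -- d_k ≤ n
    have hmem : (codeSupport C).ncard ∈ {w | ∃ D : Submodule (ZMod 2) (Fin n → ZMod 2),
        D ≤ C ∧ finrank (ZMod 2) D = k ∧ w = (codeSupport D).ncard} :=
      ⟨C, le_rfl, hk, rfl⟩
    calc ghw C k ≤ (codeSupport C).ncard := Nat.sInf_le hmem
      _ ≤ (Set.univ : Set (Fin n)).ncard :=
          Set.ncard_le_ncard (Set.subset_univ _) Set.finite_univ
      _ = n := by rw [Set.ncard_univ]; simp
end

section
/- Let C₃ ⊆ (ℤ/4ℤ)⁶ be the ℤ/4ℤ-linear code generated by the rows of G = [[1,0,0,1,2,2],[0,1,0,2,0,2],[0,0,1,2,2,0]], and let Λ = (1/2)·{x ∈ ℤ⁶ : (x mod 4) ∈ C₃} be its Construction A lattice. Then Λ is not stable: there exist two linearly independent vectors a₁, a₂ ∈ Λ whose 2×2 Gram matrix G' = (⟨aᵢ,aⱼ⟩) satisfies det(G') = 3/4 < 1. -/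
/-- The rows of the generator matrix of the ℤ/4ℤ-linear code `C₃`. -/
def genC3 : Fin 3 → (Fin 6 → ZMod 4) :=
  ![![1, 0, 0, 1, 2, 2], ![0, 1, 0, 2, 0, 2], ![0, 0, 1, 2, 2, 0]]

/-- The code `C₃ ⊆ (ℤ/4ℤ)⁶` generated by the rows of `genC3`. -/
def codeC3 : Submodule (ZMod 4) (Fin 6 → ZMod 4) :=
  Submodule.span (ZMod 4) (Set.range genC3)

/-- The Construction A lattice `Λ = (1/2)·{x ∈ ℤ⁶ : x mod 4 ∈ C₃}`. -/
def latticeC3 : Set (Fin 6 → ℝ) :=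
  { v | ∃ x : Fin 6 → ℤ, (fun i => (x i : ZMod 4)) ∈ codeC3 ∧
    v = fun i => (x i : ℝ) / 2 }

lemma cons_val_five' {α : Type*} (x : α) (u : Fin 5 → α) :
    Matrix.vecCons x u 5 = u 4 := rfl

lemma gen_mem (i : Fin 3) : genC3 i ∈ codeC3 :=
  Submodule.subset_span ⟨i, rfl⟩

/-- the lattice `Λ = A₄(C₃)` is not stable: it contains two linearly
independent vectors whose 2×2 Gram determinant equals `3/4 < 1`. -/
theorem latticeC3_not_stable :
    ∃ a₁ a₂ : Fin 6 → ℝ, a₁ ∈ latticeC3 ∧ a₂ ∈ latticeC3 ∧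
      LinearIndependent ℝ ![a₁, a₂] ∧
      (!![∑ j, a₁ j * a₁ j, ∑ j, a₁ j * a₂ j;
          ∑ j, a₂ j * a₁ j, ∑ j, a₂ j * a₂ j] : Matrix (Fin 2) (Fin 2) ℝ).det
        = 3 / 4 ∧ (3 / 4 : ℝ) < 1 := by
  refine ⟨![1/2, -1/2, -1/2, 1/2, 0, 0], ![0, 1, 0, 0, 0, 0], ?_, ?_, ?_, ?_, by norm_num⟩
  · refine ⟨![1, -1, -1, 1, 0, 0], ?_, ?_⟩
    · have h : (fun i => (((![1, -1, -1, 1, 0, 0] : Fin 6 → ℤ) i : ZMod 4)))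
          = genC3 0 + (3 : ZMod 4) • genC3 1 + (3 : ZMod 4) • genC3 2 := by
        funext i; fin_cases i <;> simp [genC3] <;> decide
      rw [h]
      exact add_mem (add_mem (gen_mem 0) (Submodule.smul_mem _ _ (gen_mem 1)))
        (Submodule.smul_mem _ _ (gen_mem 2))
    · funext i; fin_cases i <;> norm_num
  · refine ⟨![0, 2, 0, 0, 0, 0], ?_, ?_⟩
    · have h : (fun i => (((![0, 2, 0, 0, 0, 0] : Fin 6 → ℤ) i : ZMod 4)))
          = (2 : ZMod 4) • genC3 1 := by
        funext i; fin_cases i <;> simp [genC3] <;> decide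
      rw [h]
      exact Submodule.smul_mem _ _ (gen_mem 1)
    · funext i; fin_cases i <;> norm_num
  · rw [LinearIndependent.pair_iff]
    intro s t h
    have h0 := congrFun h 0
    have h1 := congrFun h 1
    simp [Pi.smul_apply] at h0 h1
    constructor <;> linarith
  · have h1 : (![1/2, -(1/2), -(1/2), 1/2, 0, 0] : Fin 6 → ℝ) 5 = 0 := rfl
    have h2 : (![0, 1, 0, 0, 0, 0] : Fin 6 → ℝ) 5 = 0 := rfl
    simp [Fin.sum_univ_six, Matrix.det_fin_two, cons_val_five']
    norm_num
end

section
/- Let C₃ ⊆ (ℤ/4ℤ)⁶ be the ℤ/4ℤ-linear code generated by the rows of G = [[1,0,0,1,2,2],[0,1,0,2,0,2],[0,0,1,2,2,0]], and let Λ = (1/2)·{x ∈ ℤ⁶ : (x mod 4) ∈ C₃} be its Construction A lattice. Then the minimum squared Euclidean norm of a nonzero vector of Λ equals 1, and Λ contains exactly 12 vectors of squared norm 1. -/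
/-- Euclidean weight of an element of `ℤ/4ℤ`. -/
def ew (z : ZMod 4) : ℕ := (min z.val (4 - z.val))^2

/-- Minimal lift of an element of `ℤ/4ℤ`, with a sign choice for `2`. -/
def liftv (z : ZMod 4) (s : Bool) : ℤ :=
  if z = 2 then (if s then 2 else -2) else if z = 3 then -1 else z.val

/-- The 12 integer vectors `x` with `x/2` of norm one in the lattice. -/
def XF : Finset (Fin 6 → ℤ) :=
  {![0,2,0,0,0,0], ![0,-2,0,0,0,0], ![0,0,2,0,0,0], ![0,0,-2,0,0,0],
   ![1,1,1,1,0,0], ![1,1,-1,1,0,0], ![1,-1,1,1,0,0], ![1,-1,-1,1,0,0],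
   ![-1,1,1,-1,0,0], ![-1,1,-1,-1,0,0], ![-1,-1,1,-1,0,0], ![-1,-1,-1,-1,0,0]}

lemma mem_code_iff (c : Fin 6 → ZMod 4) :
    c ∈ codeC3 ↔ ∃ t : Fin 3 → ZMod 4, ∑ i, t i • genC3 i = c := by
  rw [codeC3]
  exact Submodule.mem_span_range_iff_exists_fun _

lemma int_lift (x : ℤ) (z : ZMod 4) (h : (x : ZMod 4) = z) (hb : x ^ 2 ≤ 4) :
    x ^ 2 = (ew z : ℤ) ∧ x = liftv z (decide (0 < x)) ∧ (z = 0 → x = 0) := by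
  have hd : (4:ℤ) ∣ x - z.val := by
    have h2 : ((x - (z.val:ℤ) : ℤ) : ZMod 4) = 0 := by
      push_cast [h]
      simp [ZMod.natCast_val, ZMod.cast_id]
    exact (ZMod.intCast_zmod_eq_zero_iff_dvd _ 4).mp h2
  have hv : z.val < 4 := z.val_lt
  have hx1 : -2 ≤ x := by nlinarith
  have hx2 : x ≤ 2 := by nlinarith
  have hz : z = (z.val : ZMod 4) := by simp [ZMod.natCast_val, ZMod.cast_id]
  have hc : z.val = 0 ∨ z.val = 1 ∨ z.val = 2 ∨ z.val = 3 := by omega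
  rcases hc with h0 | h0 | h0 | h0 <;> rw [h0] at hz hd <;> subst hz
  · have : x = 0 := by omega
    subst this; refine ⟨by decide, by decide, fun _ => rfl⟩
  · have : x = 1 := by omega
    subst this; refine ⟨by decide, by decide, by decide⟩
  · have : x = 2 ∨ x = -2 := by omega
    rcases this with rfl | rfl
    · exact ⟨by decide, by decide, by decide⟩
    · exact ⟨by decide, by decide, by decide⟩
  · have : x = -1 := by omega
    subst this; exact ⟨by decide, by decide, by decide⟩

lemma keyA : ∀ t : Fin 3 → ZMod 4,
    (∑ j, ew ((∑ i, t i • genC3 i) j) ≤ 3) → (∑ i, t i • genC3 i) = 0 := by decide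

set_option maxRecDepth 10000 in
lemma keyB : ∀ t : Fin 3 → ZMod 4, ∀ s : Fin 6 → Bool,
    (∑ j, ew ((∑ i, t i • genC3 i) j) = 4) →
    (fun j => liftv ((∑ i, t i • genC3 i) j) (s j)) ∈ XF := by decide

lemma keyC : ∀ x ∈ XF, ∃ t : Fin 3 → ZMod 4,
    (∑ i, t i • genC3 i) = (fun j => ((x j : ℤ) : ZMod 4)) := by decide

lemma keyD : ∀ x ∈ XF, ∑ j, x j ^ 2 = (4:ℤ) := by decide

lemma sum_half_sq (y : Fin 6 → ℤ) :
    (∑ j, ((y j : ℝ)/2)^2) = ((∑ j, y j ^ 2 : ℤ) : ℝ)/4 := by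
  rw [Fin.sum_univ_six]
  push_cast
  rw [Fin.sum_univ_six]
  ring

/-- the minimum squared Euclidean norm of a nonzero vector of
`Λ = A₄(C₃)` equals `1`, and `Λ` contains exactly `12` vectors of squared norm `1`. -/
theorem latticeC3_min_norm_and_kissing :
    IsLeast { t : ℝ | ∃ v ∈ latticeC3, v ≠ 0 ∧ t = ∑ j, v j ^ 2 } 1 ∧
      { v | v ∈ latticeC3 ∧ ∑ j, v j ^ 2 = 1 }.ncard = 12 := by
  constructor
  · constructor
    · -- `1` is attained
      refine ⟨fun j => ((![0,2,0,0,0,0] : Fin 6 → ℤ) j : ℝ)/2,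
        ⟨![0,2,0,0,0,0], ?_, rfl⟩, ?_, ?_⟩
      · rw [mem_code_iff]
        exact ⟨![0,2,0], by decide⟩
      · intro h
        have := congrFun h 1
        norm_num at this
      · rw [Fin.sum_univ_six]
        norm_num [show (![0,2,0,0,0,0] : Fin 6 → ℤ) 0 = 0 from rfl, show (![0,2,0,0,0,0] : Fin 6 → ℤ) 1 = 2 from rfl, show (![0,2,0,0,0,0] : Fin 6 → ℤ) 2 = 0 from rfl, show (![0,2,0,0,0,0] : Fin 6 → ℤ) 3 = 0 from rfl, show (![0,2,0,0,0,0] : Fin 6 → ℤ) 4 = 0 from rfl, show (![0,2,0,0,0,0] : Fin 6 → ℤ) 5 = 0 from rfl]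
    · -- `1` is a lower bound
      rintro r ⟨v, hv, hne, rfl⟩
      obtain ⟨x, hmem, rfl⟩ := hv
      obtain ⟨t, ht⟩ := (mem_code_iff _).mp hmem
      by_contra hlt
      push_neg at hlt
      rw [sum_half_sq] at hlt
      have hZ : ∑ j, x j ^ 2 ≤ 3 := by
        have h4 : ((∑ j, x j ^ 2 : ℤ) : ℝ) < 4 := by linarith
        have h5 : (∑ j, x j ^ 2 : ℤ) < 4 := by exact_mod_cast h4
        omega
      have hb : ∀ j, x j ^ 2 ≤ 4 := by
        intro j
        have h1 : x j ^ 2 ≤ ∑ i, x i ^ 2 :=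
          Finset.single_le_sum (fun i _ => sq_nonneg (x i)) (Finset.mem_univ j)
        omega
      have hcast : ∀ j, (x j : ZMod 4) = (∑ i, t i • genC3 i) j := fun j =>
        (congrFun ht j).symm
      have hsq : ∀ j, x j ^ 2 = (ew ((∑ i, t i • genC3 i) j) : ℤ) := fun j =>
        (int_lift (x j) _ (hcast j) (hb j)).1
      have hewsum : ∑ j, ew ((∑ i, t i • genC3 i) j) ≤ 3 := by
        have : (∑ j, (ew ((∑ i, t i • genC3 i) j) : ℤ)) ≤ 3 := by
          rw [← Finset.sum_congr rfl (fun j _ => hsq j)]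
          exact hZ
        exact_mod_cast this
      have h0 := keyA t hewsum
      apply hne
      funext j
      have hz0 : (∑ i, t i • genC3 i) j = 0 := by rw [h0]; rfl
      have : x j = 0 := (int_lift (x j) _ (hcast j) (hb j)).2.2 hz0
      simp [this]
  · -- exactly 12 vectors of norm 1
    have hinj : Function.Injective (fun (y : Fin 6 → ℤ) => (fun j => (y j : ℝ)/2)) := by
      intro a b h
      funext j
      have h1 := congrFun h j
      field_simp at h1
      exact_mod_cast h1
    have hS : { v | v ∈ latticeC3 ∧ ∑ j, v j ^ 2 = 1 } =
        (fun (y : Fin 6 → ℤ) => (fun j => (y j : ℝ)/2)) '' ↑XF := by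
      ext v
      constructor
      · rintro ⟨⟨x, hmem, rfl⟩, hsum⟩
        obtain ⟨t, ht⟩ := (mem_code_iff _).mp hmem
        rw [sum_half_sq] at hsum
        have hZ : ∑ j, x j ^ 2 = 4 := by
          have : ((∑ j, x j ^ 2 : ℤ) : ℝ) = 4 := by linarith
          exact_mod_cast this
        have hb : ∀ j, x j ^ 2 ≤ 4 := by
          intro j
          have h1 : x j ^ 2 ≤ ∑ i, x i ^ 2 :=
            Finset.single_le_sum (fun i _ => sq_nonneg (x i)) (Finset.mem_univ j)
          omega
        have hcast : ∀ j, (x j : ZMod 4) = (∑ i, t i • genC3 i) j := fun j =>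
          (congrFun ht j).symm
        have hsq : ∀ j, x j ^ 2 = (ew ((∑ i, t i • genC3 i) j) : ℤ) := fun j =>
          (int_lift (x j) _ (hcast j) (hb j)).1
        have hewsum : ∑ j, ew ((∑ i, t i • genC3 i) j) = 4 := by
          have : (∑ j, (ew ((∑ i, t i • genC3 i) j) : ℤ)) = 4 := by
            rw [← Finset.sum_congr rfl (fun j _ => hsq j)]
            exact hZ
          exact_mod_cast this
        have hx : x = fun j => liftv ((∑ i, t i • genC3 i) j) (decide (0 < x j)) :=
          funext fun j => (int_lift (x j) _ (hcast j) (hb j)).2.1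
        refine ⟨x, ?_, rfl⟩
        rw [Finset.mem_coe, hx]
        exact keyB t (fun j => decide (0 < x j)) hewsum
      · rintro ⟨x, hx, rfl⟩
        rw [Finset.mem_coe] at hx
        refine ⟨⟨x, ?_, rfl⟩, ?_⟩
        · rw [mem_code_iff]
          exact keyC x hx
        · rw [sum_half_sq, keyD x hx]
          norm_num
    rw [hS, Set.ncard_image_of_injective _ hinj, Set.ncard_coe_finset]
    decide
end
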